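/- Let (w_0, w_1) be positive integers with gcd(w_0, w_1) = 1, and let d ∈ ⟨w_0, w_1⟩_ℕ. Set δ = den(d; w_0, w_1) − 1. Then for every nonzero f ∈ 𝔽_q[x_0, x_1]^w_d: |V_{ℙ(w_0,w_1)}(f)(𝔽_q)| ≤ δ if both w_0 and w_1 divide d; |V_{ℙ(w_0,w_1)}(f)(𝔽_q)| ≤ δ + 1 if exactly one of w_0, w_1 divides d; and |V_{ℙ(w_0,w_1)}(f)(𝔽_q)| ≤ δ + 2 if neither w_0 nor w_1 divides d. -/

import Mathlib

open MvPolynomial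

noncomputable section

/-- `pSum q k = 1 + q + ⋯ + q^(k-1)`; so `p_m = pSum q (m+1)`. -/
def pSum (q k : ℕ) : ℕ := ∑ i ∈ Finset.range k, q ^ i

/-- Equivalence of nonzero vectors under weighted scaling by the algebraic closure. -/
def wRel (F : Type) [Field F] {m : ℕ} (w : Fin (m + 1) → ℕ)
    (x y : {v : Fin (m + 1) → AlgebraicClosure F // v ≠ 0}) : Prop :=
  ∃ lam : (AlgebraicClosure F)ˣ, ∀ i, y.1 i = (lam : AlgebraicClosure F) ^ w i * x.1 i

/-- The weighted projective space `ℙ(w)` as set of orbits. -/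
def PW (F : Type) [Field F] {m : ℕ} (w : Fin (m + 1) → ℕ) : Type :=
  Quot (wRel F w)

def PW.mk (F : Type) [Field F] {m : ℕ} (w : Fin (m + 1) → ℕ)
    (x : {v : Fin (m + 1) → AlgebraicClosure F // v ≠ 0}) : PW F w :=
  Quot.mk _ x

/-- The `𝔽_q`-rational points of `ℙ(w)`: orbits fixed by coordinatewise Frobenius. -/
def ratPts (F : Type) [Field F] [Fintype F] {m : ℕ} (w : Fin (m + 1) → ℕ) :
    Set (PW F w) :=
  {c | ∃ x : {v : Fin (m + 1) → AlgebraicClosure F // v ≠ 0},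
    PW.mk F w x = c ∧
    ∃ h : (fun i => x.1 i ^ Fintype.card F) ≠ (0 : Fin (m + 1) → AlgebraicClosure F),
      PW.mk F w ⟨fun i => x.1 i ^ Fintype.card F, h⟩ = c}

/-- `V_{ℙ(w)}(f)(𝔽_q)`: the rational points at which `f` vanishes. -/
def vanishSet (F : Type) [Field F] [Fintype F] {m : ℕ} (w : Fin (m + 1) → ℕ)
    (f : MvPolynomial (Fin (m + 1)) F) : Set (PW F w) :=
  {c | c ∈ ratPts F w ∧ ∀ x, PW.mk F w x = c →
    MvPolynomial.eval x.1 (MvPolynomial.map (algebraMap F (AlgebraicClosure F)) f) = 0}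

/-- `e_q(d; w)`: the maximal number of rational zeroes of a nonzero
weighted homogeneous polynomial of degree `d`. -/
def eMax (F : Type) [Field F] [Fintype F] {m : ℕ} (w : Fin (m + 1) → ℕ) (d : ℕ) : ℕ :=
  sSup {n | ∃ f : MvPolynomial (Fin (m + 1)) F,
    f ≠ 0 ∧ MvPolynomial.IsWeightedHomogeneous w f d ∧ n = (vanishSet F w f).ncard}

/-- weighted degree of a monomial (exponent vector). -/
def wdeg {m : ℕ} (w : Fin (m + 1) → ℕ) (a : Fin (m + 1) →₀ ℕ) : ℕ := ∑ i, w i * a i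

/-- degree-lexicographic order (weighted degree first, `x_0 < x_1 < ⋯ < x_m`). -/
def dlexLt {m : ℕ} (w : Fin (m + 1) → ℕ) (a b : Fin (m + 1) →₀ ℕ) : Prop :=
  wdeg w a < wdeg w b ∨
    (wdeg w a = wdeg w b ∧ ∃ i, a i < b i ∧ ∀ j, i < j → a j = b j)

/-- `a` is the initial monomial of `f` for the weighted deglex order. -/
def IsInitial (F : Type) [Field F] {m : ℕ} (w : Fin (m + 1) → ℕ)
    (f : MvPolynomial (Fin (m + 1)) F) (a : Fin (m + 1) →₀ ℕ) : Prop :=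
  a ∈ f.support ∧ ∀ b ∈ f.support, b ≠ a → dlexLt w b a

/-- The vanishing ideal `I(ℙ(w)(𝔽_q))`, generated by the homogeneous polynomials
vanishing at every rational point. -/
def vanishingIdeal (F : Type) [Field F] [Fintype F] {m : ℕ} (w : Fin (m + 1) → ℕ) :
    Ideal (MvPolynomial (Fin (m + 1)) F) :=
  Ideal.span {g | (∃ e, MvPolynomial.IsWeightedHomogeneous w g e) ∧
    ∀ c ∈ ratPts F w, ∀ x, PW.mk F w x = c →
      MvPolynomial.eval x.1 (MvPolynomial.map (algebraMap F (AlgebraicClosure F)) g) = 0}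

/-- `M̄`: monomials divisible by no initial monomial of a nonzero homogeneous
element of the vanishing ideal. -/
def Mbar (F : Type) [Field F] [Fintype F] {m : ℕ} (w : Fin (m + 1) → ℕ) :
    Set (Fin (m + 1) →₀ ℕ) :=
  {a | ¬ ∃ g : MvPolynomial (Fin (m + 1)) F, g ≠ 0 ∧ g ∈ vanishingIdeal F w ∧
    (∃ e, MvPolynomial.IsWeightedHomogeneous w g e) ∧ ∃ b, IsInitial F w g b ∧ b ≤ a}

/-- `M̄_d`. -/
def MbarD (F : Type) [Field F] [Fintype F] {m : ℕ} (w : Fin (m + 1) → ℕ) (d : ℕ) :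
    Set (Fin (m + 1) →₀ ℕ) :=
  {a ∈ Mbar F w | wdeg w a = d}

/-- `M̄_{d,i}`. -/
def MbarDI (F : Type) [Field F] [Fintype F] {m : ℕ} (w : Fin (m + 1) → ℕ) (d : ℕ)
    (i : Fin (m + 1)) : Set (Fin (m + 1) →₀ ℕ) :=
  {a ∈ MbarD F w d | (∀ t, t < i → a t = 0) ∧ 1 ≤ a i}

/-- The regularity set `reg(ℙ(w)(𝔽_q)) = {d ≥ 1 : |M̄_d| = p_m}`. -/
def regSet (F : Type) [Field F] [Fintype F] {m : ℕ} (w : Fin (m + 1) → ℕ) : Set ℕ :=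
  {d | 1 ≤ d ∧ (MbarD F w d).ncard = pSum (Fintype.card F) (m + 1)}

/-- Footprint bound at level `dtil`: number of monomials of `M̄_{dtil}` divisible by `a`. -/
def FB (F : Type) [Field F] [Fintype F] {m : ℕ} (w : Fin (m + 1) → ℕ) (dtil : ℕ)
    (a : Fin (m + 1) →₀ ℕ) : ℕ :=
  {b | b ∈ MbarD F w dtil ∧ a ≤ b}.ncard

/-- `FB_i`: number of monomials of `M̄_{dtil, i}` divisible by `a`. -/
def FBi (F : Type) [Field F] [Fintype F] {m : ℕ} (w : Fin (m + 1) → ℕ) (dtil : ℕ)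
    (i : Fin (m + 1)) (a : Fin (m + 1) →₀ ℕ) : ℕ :=
  {b | b ∈ MbarDI F w dtil i ∧ a ≤ b}.ncard

/-- Hilbert function of `𝔽_q[x]/I(ℙ(w)(𝔽_q))` at degree `d`. -/
def hilb (F : Type) [Field F] [Fintype F] {m : ℕ} (w : Fin (m + 1) → ℕ) (d : ℕ) : ℕ :=
  Module.finrank F
    (↥(weightedHomogeneousSubmodule F w d) ⧸
      (Submodule.comap (weightedHomogeneousSubmodule F w d).subtype
        (Submodule.restrictScalars F (vanishingIdeal F w))))

/-- Denumerant: the number of representations `d = w0*i0 + w1*i1`. -/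
def den (w0 w1 d : ℕ) : ℕ := {p : ℕ × ℕ | w0 * p.1 + w1 * p.2 = d}.ncard


section AuxStmt12

/-- Bezout lemma in a commutative group. -/
lemma bez {G : Type*} [CommGroup G] (A B : G) (w0 w1 : ℕ) (hcop : Nat.gcd w0 w1 = 1)
    (hAB : A ^ w1 = B ^ w0) : ∃ lam : G, lam ^ w0 = A ∧ lam ^ w1 = B := by
  have hb : (1 : ℤ) = w0 * Nat.gcdA w0 w1 + w1 * Nat.gcdB w0 w1 := by
    have := Nat.gcd_eq_gcd_ab w0 w1
    rw [hcop] at this; exact_mod_cast this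
  set u := Nat.gcdA w0 w1
  set v := Nat.gcdB w0 w1
  have hABz : A ^ (w1 : ℤ) = B ^ (w0 : ℤ) := by
    rw [zpow_natCast, zpow_natCast, hAB]
  have key : ∀ n : ℤ, (A ^ u * B ^ v) ^ n = A ^ (u * n) * B ^ (v * n) := fun n => by
    rw [mul_zpow, ← zpow_mul, ← zpow_mul]
  refine ⟨A ^ u * B ^ v, ?_, ?_⟩
  · have hA : (A ^ u * B ^ v) ^ ((w0 : ℕ) : ℤ) = A := by
      rw [key]
      have hB : B ^ (v * (w0 : ℤ)) = A ^ ((w1 : ℤ) * v) := by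
        rw [show v * (w0 : ℤ) = (w0 : ℤ) * v by ring, zpow_mul, zpow_mul, ← hABz]
      rw [hB, ← zpow_add,
        show u * (w0 : ℤ) + (w1 : ℤ) * v = (w0 : ℤ) * u + (w1 : ℤ) * v by ring, ← hb, zpow_one]
    rw [← zpow_natCast, hA]
  · have hA : (A ^ u * B ^ v) ^ ((w1 : ℕ) : ℤ) = B := by
      rw [key]
      have hB : A ^ (u * (w1 : ℤ)) = B ^ ((w0 : ℤ) * u) := by
        rw [show u * (w1 : ℤ) = (w1 : ℤ) * u by ring, zpow_mul, zpow_mul, hABz]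
      rw [hB, ← zpow_add,
        show (w0 : ℤ) * u + v * (w1 : ℤ) = (w0 : ℤ) * u + (w1 : ℤ) * v by ring, ← hb, zpow_one]
    rw [← zpow_natCast, hA]

variable (F : Type) [Field F]

open Classical in
def phiFun (w0 w1 : ℕ) (x : {v : Fin 2 → AlgebraicClosure F // v ≠ 0}) :
    Option (AlgebraicClosure F) :=
  if x.1 1 = 0 then none else some (x.1 0 ^ w1 / x.1 1 ^ w0)

lemma phiFun_of_ne (w0 w1 : ℕ) (x : {v : Fin 2 → AlgebraicClosure F // v ≠ 0})
    (h : x.1 1 ≠ 0) : phiFun F w0 w1 x = some (x.1 0 ^ w1 / x.1 1 ^ w0) := by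
  unfold phiFun; rw [if_neg h]

lemma phiFun_of_eq (w0 w1 : ℕ) (x : {v : Fin 2 → AlgebraicClosure F // v ≠ 0})
    (h : x.1 1 = 0) : phiFun F w0 w1 x = none := by
  unfold phiFun; rw [if_pos h]

lemma phiFun_resp (w0 w1 : ℕ) (x y : {v : Fin 2 → AlgebraicClosure F // v ≠ 0})
    (h : wRel F ![w0, w1] x y) : phiFun F w0 w1 x = phiFun F w0 w1 y := by
  obtain ⟨lam, hl⟩ := h
  have h0 := hl 0
  have h1 := hl 1
  simp only [Matrix.cons_val_zero, Matrix.cons_val_one, Matrix.head_cons] at h0 h1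
  by_cases hx1 : x.1 1 = 0
  · have hy1 : y.1 1 = 0 := by rw [h1, hx1, mul_zero]
    rw [phiFun_of_eq F w0 w1 x hx1, phiFun_of_eq F w0 w1 y hy1]
  · have hy1 : y.1 1 ≠ 0 := by
      rw [h1]; exact mul_ne_zero (pow_ne_zero _ lam.ne_zero) hx1
    rw [phiFun_of_ne F w0 w1 x hx1, phiFun_of_ne F w0 w1 y hy1, h0, h1]
    congr 1
    rw [mul_pow, mul_pow, ← pow_mul, ← pow_mul, mul_comm w1 w0]
    exact (mul_div_mul_left _ _ (pow_ne_zero _ lam.ne_zero)).symm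

def phiBar (w0 w1 : ℕ) : PW F ![w0, w1] → Option (AlgebraicClosure F) :=
  Quot.lift (phiFun F w0 w1) (fun x y h => phiFun_resp F w0 w1 x y h)

lemma phiBar_mk (w0 w1 : ℕ) (x : {v : Fin 2 → AlgebraicClosure F // v ≠ 0}) :
    phiBar F w0 w1 (PW.mk F ![w0, w1] x) = phiFun F w0 w1 x := rfl

lemma ne_zero0 (x : {v : Fin 2 → AlgebraicClosure F // v ≠ 0}) (h : x.1 1 = 0) :
    x.1 0 ≠ 0 := by
  intro h0; apply x.2; funext j
  fin_cases j
  · simpa using h0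
  · simpa using h

lemma key_rel (w0 w1 : ℕ) (h0 : 0 < w0) (h1 : 0 < w1) (hcop : Nat.gcd w0 w1 = 1)
    (x y : {v : Fin 2 → AlgebraicClosure F // v ≠ 0})
    (h : phiFun F w0 w1 x = phiFun F w0 w1 y) : wRel F ![w0, w1] x y := by
  classical
  by_cases hx1 : x.1 1 = 0 <;> by_cases hy1 : y.1 1 = 0
  · have hx0 : x.1 0 ≠ 0 := ne_zero0 F x hx1
    have hy0 : y.1 0 ≠ 0 := ne_zero0 F y hy1
    obtain ⟨z, hz⟩ := IsAlgClosed.exists_pow_nat_eq (y.1 0 / x.1 0) h0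
    have hzne : z ≠ 0 := by
      intro hz0; rw [hz0, zero_pow h0.ne'] at hz
      exact hy0 (by
        have := hz.symm
        rw [div_eq_zero_iff] at this
        exact this.resolve_right hx0)
    refine ⟨Units.mk0 z hzne, Fin.forall_fin_two.mpr ⟨?_, ?_⟩⟩
    · show y.1 0 = _ ^ (![w0, w1] 0) * x.1 0
      simp only [Matrix.cons_val_zero, Units.val_mk0]
      rw [hz, div_mul_cancel₀ _ hx0]
    · show y.1 1 = _ ^ (![w0, w1] 1) * x.1 1
      rw [hx1, hy1, mul_zero]
  · rw [phiFun_of_eq F w0 w1 x hx1, phiFun_of_ne F w0 w1 y hy1] at h; exact absurd h (by simp)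
  · rw [phiFun_of_ne F w0 w1 x hx1, phiFun_of_eq F w0 w1 y hy1] at h; exact absurd h (by simp)
  · rw [phiFun_of_ne F w0 w1 x hx1, phiFun_of_ne F w0 w1 y hy1, Option.some_inj] at h
    by_cases hx0 : x.1 0 = 0
    · have hy0 : y.1 0 = 0 := by
        rw [hx0, zero_pow h1.ne', zero_div] at h
        have h' := h.symm
        rw [div_eq_zero_iff] at h'
        rcases h' with h' | h'
        · exact pow_eq_zero_iff h1.ne' |>.mp h'
        · exact absurd (pow_eq_zero_iff h0.ne' |>.mp h') hy1
      obtain ⟨z, hz⟩ := IsAlgClosed.exists_pow_nat_eq (y.1 1 / x.1 1) h1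
      have hzne : z ≠ 0 := by
        intro hz0; rw [hz0, zero_pow h1.ne'] at hz
        have := hz.symm
        rw [div_eq_zero_iff] at this
        exact hy1 (this.resolve_right hx1)
      refine ⟨Units.mk0 z hzne, Fin.forall_fin_two.mpr ⟨?_, ?_⟩⟩
      · show y.1 0 = _ ^ (![w0, w1] 0) * x.1 0
        rw [hx0, hy0, mul_zero]
      · show y.1 1 = _ ^ (![w0, w1] 1) * x.1 1
        simp only [Matrix.cons_val_one, Matrix.head_cons, Matrix.cons_val_zero, Units.val_mk0]
        rw [hz, div_mul_cancel₀ _ hx1]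
    · have hy0 : y.1 0 ≠ 0 := by
        intro hy0'
        rw [hy0', zero_pow h1.ne', zero_div, div_eq_zero_iff] at h
        rcases h with h' | h'
        · exact hx0 (pow_eq_zero_iff h1.ne' |>.mp h')
        · exact hx1 (pow_eq_zero_iff h0.ne' |>.mp h')
      have hane : y.1 0 / x.1 0 ≠ 0 := div_ne_zero hy0 hx0
      have hbne : y.1 1 / x.1 1 ≠ 0 := div_ne_zero hy1 hx1
      have hab : (y.1 0 / x.1 0) ^ w1 = (y.1 1 / x.1 1) ^ w0 := by
        rw [div_pow, div_pow, div_eq_div_iff (pow_ne_zero _ hx0) (pow_ne_zero _ hx1)]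
        rw [div_eq_div_iff (pow_ne_zero _ hx1) (pow_ne_zero _ hy1)] at h
        linear_combination -h
      obtain ⟨lam, hl0, hl1⟩ := bez (Units.mk0 _ hane) (Units.mk0 _ hbne) w0 w1 hcop
        (by ext; push_cast; simpa using hab)
      have hv0 : ((lam : (AlgebraicClosure F)) ^ w0) = y.1 0 / x.1 0 := by
        rw [← Units.val_pow_eq_pow_val, hl0]; rfl
      have hv1 : ((lam : (AlgebraicClosure F)) ^ w1) = y.1 1 / x.1 1 := by
        rw [← Units.val_pow_eq_pow_val, hl1]; rfl
      refine ⟨lam, Fin.forall_fin_two.mpr ⟨?_, ?_⟩⟩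
      · show y.1 0 = _ ^ (![w0, w1] 0) * x.1 0
        simp only [Matrix.cons_val_zero]
        rw [hv0, div_mul_cancel₀ _ hx0]
      · show y.1 1 = _ ^ (![w0, w1] 1) * x.1 1
        simp only [Matrix.cons_val_one, Matrix.head_cons, Matrix.cons_val_zero]
        rw [hv1, div_mul_cancel₀ _ hx1]

lemma phiBar_inj (w0 w1 : ℕ) (h0 : 0 < w0) (h1 : 0 < w1) (hcop : Nat.gcd w0 w1 = 1) :
    Function.Injective (phiBar F w0 w1) := by
  intro c c'
  induction c using Quot.ind with
  | _ x =>
  induction c' using Quot.ind with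
  | _ y =>
    exact fun h => Quot.sound (key_rel F w0 w1 h0 h1 hcop x y h)

end AuxStmt12

/-- Proposition 4.1 of the paper: bounds for the number of rational
zeroes on the weighted projective line `ℙ(w_0, w_1)` in terms of the denumerant. -/
theorem stmt12 (F : Type) [Field F] [Fintype F] (w0 w1 : ℕ) (h0 : 0 < w0) (h1 : 0 < w1)
    (hcop : Nat.gcd w0 w1 = 1)
    (d : ℕ) (hd : ∃ i0 i1 : ℕ, d = w0 * i0 + w1 * i1)
    (f : MvPolynomial (Fin 2) F) (hf0 : f ≠ 0)
    (hfh : MvPolynomial.IsWeightedHomogeneous ![w0, w1] f d) :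
    ((w0 ∣ d ∧ w1 ∣ d) →
      (vanishSet F ![w0, w1] f).ncard ≤ den w0 w1 d - 1) ∧
    (((w0 ∣ d ∧ ¬ w1 ∣ d) ∨ (¬ w0 ∣ d ∧ w1 ∣ d)) →
      (vanishSet F ![w0, w1] f).ncard ≤ (den w0 w1 d - 1) + 1) ∧
    ((¬ w0 ∣ d ∧ ¬ w1 ∣ d) →
      (vanishSet F ![w0, w1] f).ncard ≤ (den w0 w1 d - 1) + 2) := by
  classical
  -- weighted degree equation for monomials in the support
  have hdeg : ∀ a ∈ f.support, w0 * a 0 + w1 * a 1 = d := by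
    intro a ha
    have h := hfh (MvPolynomial.mem_support_iff.mp ha)
    rw [Finsupp.weight_apply, Finsupp.sum_fintype, Fin.sum_univ_two] at h
    · simp only [Matrix.cons_val_zero, Matrix.cons_val_one, Matrix.head_cons,
        smul_eq_mul] at h
      rw [mul_comm (a 0) w0, mul_comm (a 1) w1] at h
      exact h
    · intro i; exact zero_smul _ _
  have hsupp : f.support.Nonempty := MvPolynomial.support_nonempty.mpr hf0
  -- i₀ = minimal exponent of x₀
  obtain ⟨i₀, ⟨astar, hastar, hastar0⟩, hi₀le⟩ :
      ∃ i₀ : ℕ, (∃ a ∈ f.support, a 0 = i₀) ∧ ∀ a ∈ f.support, i₀ ≤ a 0 := by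
    refine ⟨(f.support.image fun a => a 0).min' (hsupp.image _), ?_, ?_⟩
    · have := (f.support.image fun a => a 0).min'_mem (hsupp.image _)
      rw [Finset.mem_image] at this
      obtain ⟨a, ha, ha'⟩ := this
      exact ⟨a, ha, ha'⟩
    · intro a ha
      exact Finset.min'_le _ _ (Finset.mem_image_of_mem _ ha)
  have hdstar : w0 * i₀ + w1 * astar 1 = d := by rw [← hastar0]; exact hdeg astar hastar
  -- key arithmetic : every x₀-exponent of a solution is ≡ i₀ mod w1
  have keyA : ∀ A j : ℕ, i₀ ≤ A → w0 * A + w1 * j = d → i₀ + (A - i₀) / w1 * w1 = A := by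
    intro A j hA hsol
    obtain ⟨B, hB⟩ := Nat.le.dest hA
    have hexp : w0 * (i₀ + B) + w1 * j = d := by rw [hB]; exact hsol
    rw [Nat.mul_add] at hexp
    have hBj : w0 * B + w1 * j = w1 * astar 1 := by
      have := hdstar
      omega
    have hjle : j ≤ astar 1 := by
      have : w1 * j ≤ w1 * astar 1 := by omega
      exact Nat.le_of_mul_le_mul_left this h1
    obtain ⟨c, hc⟩ := Nat.le.dest hjle
    have hwc : w0 * B = w1 * c := by
      have hma : w1 * (j + c) = w1 * j + w1 * c := Nat.mul_add _ _ _
      rw [← hc] at hBj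
      omega
    have hdvdB : w1 ∣ B :=
      Nat.Coprime.dvd_of_dvd_mul_left (Nat.Coprime.symm hcop) ⟨c, hwc⟩
    have hABi : A - i₀ = B := by omega
    rw [hABi, Nat.div_mul_cancel hdvdB]
    omega
  have hk : ∀ a ∈ f.support, i₀ + (a 0 - i₀) / w1 * w1 = a 0 :=
    fun a ha => keyA (a 0) (a 1) (hi₀le a ha) (hdeg a ha)
  -- the denominator count: lower bound from an arithmetic progression of solutions
  set e2n : ℕ := if i₀ ≠ 0 ∧ w1 ∣ d then 1 else 0 with he2n
  have hdenlb : ∀ A j : ℕ, i₀ ≤ A → w0 * A + w1 * j = d →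
      (A - i₀) / w1 + 1 + e2n ≤ den w0 w1 d := by
    intro A j hA hsol
    have hAeq : i₀ + (A - i₀) / w1 * w1 = A := keyA A j hA hsol
    set k := (A - i₀) / w1 with hkdef
    set ι : ℕ → ℕ × ℕ := fun t => (i₀ + t * w1, astar 1 - t * w0) with hι
    have hwmem : ∀ t, t ≤ k → w0 * (ι t).1 + w1 * (ι t).2 = d := by
      intro t ht
      have htw : t * w1 ≤ k * w1 := Nat.mul_le_mul_right _ ht
      have hta : i₀ + t * w1 ≤ A := by omega
      have e1 : w0 * (i₀ + t * w1) + w1 * j ≤ d := by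
        calc w0 * (i₀ + t * w1) + w1 * j ≤ w0 * A + w1 * j :=
              Nat.add_le_add_right (Nat.mul_le_mul_left w0 hta) _
          _ = d := hsol
      have e2 : w0 * (i₀ + t * w1) = w0 * i₀ + w0 * (t * w1) := Nat.mul_add _ _ _
      have e3 : w0 * (t * w1) ≤ w1 * astar 1 := by
        have := hdstar
        omega
      have e4 : t * w0 ≤ astar 1 := by
        have e5 : w1 * (t * w0) ≤ w1 * astar 1 := by
          have hce : w1 * (t * w0) = w0 * (t * w1) := by ring
          omega
        exact Nat.le_of_mul_le_mul_left e5 h1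
      obtain ⟨c, hc⟩ := Nat.le.dest e4
      have h5 : (ι t).2 = c := by
        simp only [hι]
        omega
      show w0 * (ι t).1 + w1 * (ι t).2 = d
      rw [h5]
      have h6 : w0 * (ι t).1 + w1 * c = w0 * i₀ + w1 * (t * w0 + c) := by
        simp only [hι]; ring
      rw [h6, hc, hdstar]
    have hinj : Set.InjOn ι (Finset.range (k + 1)) := by
      intro t _ t' _ heq
      have h1' : i₀ + t * w1 = i₀ + t' * w1 := congrArg Prod.fst heq
      have h2' : t * w1 = t' * w1 := by omega
      exact Nat.eq_of_mul_eq_mul_right h1 h2'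
    have hfin : ({p : ℕ × ℕ | w0 * p.1 + w1 * p.2 = d}).Finite := by
      apply Set.Finite.subset ((Set.finite_Iic d).prod (Set.finite_Iic d))
      rintro ⟨p1, p2⟩ hp
      simp only [Set.mem_setOf_eq] at hp
      constructor
      · simp only [Set.mem_Iic]
        have := Nat.le_mul_of_pos_left p1 h0
        omega
      · simp only [Set.mem_Iic]
        have := Nat.le_mul_of_pos_left p2 h1
        omega
    have hcard : ∀ P : Finset (ℕ × ℕ), ↑P ⊆ {p : ℕ × ℕ | w0 * p.1 + w1 * p.2 = d} →
        P.card ≤ den w0 w1 d := by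
      intro P hP
      have := Set.ncard_le_ncard hP hfin
      rwa [Set.ncard_coe_finset] at this
    by_cases hcase : i₀ ≠ 0 ∧ w1 ∣ d
    · have he2n1 : e2n = 1 := by rw [he2n, if_pos hcase]
      rw [he2n1]
      have hP := hcard (insert (0, d / w1) ((Finset.range (k + 1)).image ι)) ?_
      · have hnotmem : (0, d / w1) ∉ (Finset.range (k + 1)).image ι := by
          intro hmem
          rw [Finset.mem_image] at hmem
          obtain ⟨t, _, ht⟩ := hmem
          have : i₀ + t * w1 = 0 := congrArg Prod.fst ht
          omega
        rw [Finset.card_insert_of_notMem hnotmem,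
          Finset.card_image_of_injOn hinj, Finset.card_range] at hP
        omega
      · intro p hp
        simp only [Finset.coe_insert, Set.mem_insert_iff, Finset.coe_image,
          Set.mem_image] at hp
        rcases hp with rfl | ⟨t, ht, rfl⟩
        · simp only [Set.mem_setOf_eq]
          rw [Nat.mul_div_cancel' hcase.2]
          omega
        · simp only [Finset.mem_coe, Finset.mem_range] at ht
          exact hwmem t (by omega)
    · have he2n0 : e2n = 0 := by rw [he2n, if_neg hcase]
      rw [he2n0]
      have hP := hcard ((Finset.range (k + 1)).image ι) ?_
      · rw [Finset.card_image_of_injOn hinj, Finset.card_range] at hP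
        omega
      · intro p hp
        simp only [Finset.coe_image, Set.mem_image, Finset.mem_coe,
          Finset.mem_range] at hp
        obtain ⟨t, ht, rfl⟩ := hp
        exact hwmem t (by omega)
  -- the one-variable polynomial g
  set g : Polynomial F :=
    ∑ a ∈ f.support, Polynomial.C (MvPolynomial.coeff a f) * Polynomial.X ^ ((a 0 - i₀) / w1)
    with hgdef
  have hgcoeff : ∀ n, g.coeff n =
      ∑ a ∈ f.support, (if (a 0 - i₀) / w1 = n then MvPolynomial.coeff a f else 0) := by
    intro n
    rw [hgdef, Polynomial.finset_sum_coeff]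
    refine Finset.sum_congr rfl fun a _ => ?_
    rw [Polynomial.coeff_C_mul, Polynomial.coeff_X_pow]
    by_cases h : (a 0 - i₀) / w1 = n
    · rw [if_pos h.symm, if_pos h, mul_one]
    · rw [if_neg (Ne.symm h), if_neg h, mul_zero]
  have hkinj : ∀ a ∈ f.support, ∀ b ∈ f.support,
      (a 0 - i₀) / w1 = (b 0 - i₀) / w1 → a = b := by
    intro a ha b hb hkk
    have h00 : a 0 = b 0 := by rw [← hk a ha, ← hk b hb, hkk]
    have e1 := hdeg a ha
    have e2 := hdeg b hb
    rw [← h00] at e2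
    have h11 : a 1 = b 1 := by
      have h' : w1 * a 1 = w1 * b 1 := by omega
      exact Nat.eq_of_mul_eq_mul_left h1 h'
    ext i
    fin_cases i
    · exact h00
    · exact h11
  have hgcoeff_single : ∀ a ∈ f.support,
      g.coeff ((a 0 - i₀) / w1) = MvPolynomial.coeff a f := by
    intro a ha
    rw [hgcoeff]
    rw [Finset.sum_eq_single_of_mem a ha]
    · rw [if_pos rfl]
    · intro b hb hba
      rw [if_neg]
      intro hcon
      exact hba (hkinj b hb a ha hcon)
  have hgne : g ≠ 0 := by
    intro hg0
    obtain ⟨a, ha⟩ := hsupp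
    have := hgcoeff_single a ha
    rw [hg0, Polynomial.coeff_zero] at this
    exact (MvPolynomial.mem_support_iff.mp ha) this.symm
  -- ctop: the coefficient of the monomial with x₁-exponent 0
  set ctop : F := ∑ a ∈ f.support, (if a 1 = 0 then MvPolynomial.coeff a f else 0)
    with hctopdef
  set e3n : ℕ := if w0 ∣ d ∧ ctop = 0 then 1 else 0 with he3n
  -- Master degree bound
  have hMasterB : g.natDegree + 1 + e2n + e3n ≤ den w0 w1 d := by
    by_cases he3 : w0 ∣ d ∧ ctop = 0
    · have he3n1 : e3n = 1 := by rw [he3n, if_pos he3]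
      set A : ℕ := d / w0 with hA
      have hsolA : w0 * A + w1 * 0 = d := by
        rw [Nat.mul_zero, Nat.add_zero, hA, Nat.mul_div_cancel' he3.1]
      have hi₀A : i₀ ≤ A := by
        rw [hA, Nat.le_div_iff_mul_le h0]
        have := hdstar
        have hcm : i₀ * w0 = w0 * i₀ := Nat.mul_comm _ _
        omega
      set K : ℕ := (A - i₀) / w1 with hK
      have hKA : i₀ + K * w1 = A := keyA A 0 hi₀A hsolA
      have hble : ∀ a ∈ f.support, a 0 ≤ A := by
        intro a ha
        rw [hA, Nat.le_div_iff_mul_le h0]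
        have := hdeg a ha
        have hcm : a 0 * w0 = w0 * a 0 := Nat.mul_comm _ _
        omega
      have hconv : ∀ a ∈ f.support, (a 0 - i₀) / w1 ≤ K := fun a ha =>
        Nat.div_le_div_right (Nat.sub_le_sub_right (hble a ha) _)
      have hdgK : g.natDegree ≤ K := by
        rw [hgdef]
        exact Polynomial.natDegree_sum_le_of_forall_le _ _ fun a ha =>
          le_trans (Polynomial.natDegree_C_mul_X_pow_le _ _) (hconv a ha)
      have hcoeffK : g.coeff K = ctop := by
        rw [hgcoeff, hctopdef]
        refine Finset.sum_congr rfl fun a ha => ?_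
        have hiff : (a 0 - i₀) / w1 = K ↔ a 1 = 0 := by
          constructor
          · intro hke
            have ha0 : a 0 = A := by rw [← hk a ha, hke, hKA]
            have hda : w0 * a 0 = d := by rw [ha0]; omega
            have hdg := hdeg a ha
            have hw1a : w1 * a 1 = 0 := by omega
            rcases mul_eq_zero.mp hw1a with h' | h'
            · omega
            · exact h'
          · intro ha1
            have := hdeg a ha
            rw [ha1, Nat.mul_zero, Nat.add_zero] at this
            have ha0 : a 0 = A := by
              rw [hA, ← this, Nat.mul_div_cancel_left _ h0]
            rw [ha0]
        by_cases hcnd : a 1 = 0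
        · rw [if_pos (hiff.mpr hcnd), if_pos hcnd]
        · rw [if_neg (fun hcon => hcnd (hiff.mp hcon)), if_neg hcnd]
      have hdglt : g.natDegree < K := by
        rcases lt_or_eq_of_le hdgK with hlt | heq
        · exact hlt
        · exfalso
          have : g.leadingCoeff = 0 := by
            rw [Polynomial.leadingCoeff, heq, hcoeffK, he3.2]
          exact hgne (Polynomial.leadingCoeff_eq_zero.mp this)
      have := hdenlb A 0 hi₀A hsolA
      rw [← hK] at this
      omega
    · have he3n0 : e3n = 0 := by rw [he3n, if_neg he3]
      obtain ⟨amax, hamax, hmaxle⟩ := f.support.exists_max_image (fun a => a 0) hsupp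
      have hconv : ∀ a ∈ f.support, (a 0 - i₀) / w1 ≤ (amax 0 - i₀) / w1 := fun a ha =>
        Nat.div_le_div_right (Nat.sub_le_sub_right (hmaxle a ha) _)
      have hdgK : g.natDegree ≤ (amax 0 - i₀) / w1 := by
        rw [hgdef]
        exact Polynomial.natDegree_sum_le_of_forall_le _ _ fun a ha =>
          le_trans (Polynomial.natDegree_C_mul_X_pow_le _ _) (hconv a ha)
      have := hdenlb (amax 0) (amax 1) (hi₀le amax hamax) (hdeg amax hamax)
      omega
  -- relation for the x₁ exponents
  have haj : ∀ a ∈ f.support, a 1 + w0 * ((a 0 - i₀) / w1) = astar 1 := by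
    intro a ha
    have hka := hk a ha
    set k := (a 0 - i₀) / w1 with hkd
    have e := hdeg a ha
    rw [← hka] at e
    have e2 : w0 * (i₀ + k * w1) = w0 * i₀ + w0 * (k * w1) := Nat.mul_add _ _ _
    have e3 : w1 * (a 1 + w0 * k) = w1 * a 1 + w1 * (w0 * k) := Nat.mul_add _ _ _
    have e4 : w1 * (w0 * k) = w0 * (k * w1) := by ring
    have e5 : w1 * (a 1 + w0 * k) = w1 * astar 1 := by omega
    exact Nat.eq_of_mul_eq_mul_left h1 e5
  set gbar : Polynomial (AlgebraicClosure F) := g.map (algebraMap F (AlgebraicClosure F))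
    with hgbar
  have hgbarne : gbar ≠ 0 := by
    rw [hgbar, Ne, Polynomial.map_eq_zero_iff (algebraMap F (AlgebraicClosure F)).injective]
    exact hgne
  have hevalId : ∀ v : Fin 2 → AlgebraicClosure F, v 0 ≠ 0 → v 1 ≠ 0 →
      MvPolynomial.eval v (MvPolynomial.map (algebraMap F (AlgebraicClosure F)) f) =
        v 0 ^ i₀ * v 1 ^ astar 1 * Polynomial.eval (v 0 ^ w1 / v 1 ^ w0) gbar := by
    intro v hv0 hv1
    rw [MvPolynomial.eval_map, MvPolynomial.eval₂_eq', hgbar, Polynomial.eval_map, hgdef,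
      Polynomial.eval₂_finset_sum, Finset.mul_sum]
    refine Finset.sum_congr rfl fun a ha => ?_
    rw [Fin.prod_univ_two]
    have hka := (hk a ha).symm
    have hajle : w0 * ((a 0 - i₀) / w1) ≤ astar 1 := by have := haj a ha; omega
    have haje : a 1 = astar 1 - w0 * ((a 0 - i₀) / w1) := by have := haj a ha; omega
    rw [Polynomial.eval₂_mul, Polynomial.eval₂_C, Polynomial.eval₂_X_pow]
    rw [hka, haje]
    set k := (a 0 - i₀) / w1
    rw [pow_add, pow_sub₀ _ hv1 hajle]
    rw [div_pow, ← pow_mul, ← pow_mul]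
    simp only [Nat.add_sub_cancel_left, Nat.mul_div_cancel _ h1]
    field_simp
    ring
  have hroot : ∀ v : Fin 2 → AlgebraicClosure F, v 0 ≠ 0 → v 1 ≠ 0 →
      MvPolynomial.eval v (MvPolynomial.map (algebraMap F (AlgebraicClosure F)) f) = 0 →
      (v 0 ^ w1 / v 1 ^ w0) ∈ gbar.roots.toFinset := by
    intro v hv0 hv1 hev
    rw [hevalId v hv0 hv1] at hev
    rcases mul_eq_zero.mp hev with h' | h'
    · exact absurd h' (mul_ne_zero (pow_ne_zero _ hv0) (pow_ne_zero _ hv1))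
    · rw [Multiset.mem_toFinset, Polynomial.mem_roots']
      exact ⟨hgbarne, h'⟩
  have hinfty : ∀ v : Fin 2 → AlgebraicClosure F, v 1 = 0 → v 0 ≠ 0 →
      MvPolynomial.eval v (MvPolynomial.map (algebraMap F (AlgebraicClosure F)) f) = 0 →
      ctop = 0 := by
    intro v h1v h0v hev
    by_cases hex : ∃ a ∈ f.support, a 1 = 0
    · obtain ⟨a1, ha1, ha10⟩ := hex
      have hsame : ∀ b ∈ f.support, b 1 = 0 → b 0 = a1 0 := by
        intro b hb hb0
        have e1 := hdeg b hb
        have e2 := hdeg a1 ha1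
        rw [hb0] at e1
        rw [ha10] at e2
        have : w0 * b 0 = w0 * a1 0 := by omega
        exact Nat.eq_of_mul_eq_mul_left h0 this
      have hevcalc : MvPolynomial.eval v (MvPolynomial.map (algebraMap F (AlgebraicClosure F)) f)
          = algebraMap F (AlgebraicClosure F) ctop * v 0 ^ (a1 0) := by
        rw [MvPolynomial.eval_map, MvPolynomial.eval₂_eq', hctopdef, map_sum, Finset.sum_mul]
        refine Finset.sum_congr rfl fun b hb => ?_
        rw [Fin.prod_univ_two]
        by_cases hb0 : b 1 = 0
        · rw [if_pos hb0, hb0, pow_zero, mul_one, hsame b hb hb0]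
        · simp [hb0, h1v]
      rw [hevcalc] at hev
      rcases mul_eq_zero.mp hev with h' | h'
      · exact (algebraMap F (AlgebraicClosure F)).injective (by rw [map_zero]; exact h')
      · exact absurd h' (pow_ne_zero _ h0v)
    · rw [hctopdef]
      exact Finset.sum_eq_zero fun a ha => if_neg fun h => hex ⟨a, ha, h⟩
  have h0pt : ∀ v : Fin 2 → AlgebraicClosure F, v 0 = 0 → v 1 ≠ 0 →
      MvPolynomial.eval v (MvPolynomial.map (algebraMap F (AlgebraicClosure F)) f) = 0 →
      i₀ ≠ 0 := by
    intro v h0v h1v hev hi00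
    have hastar00 : astar 0 = 0 := by rw [hastar0, hi00]
    have huniq : ∀ b ∈ f.support, b ≠ astar → b 0 ≠ 0 := by
      intro b hb hbne hb0
      apply hbne
      have h00 : b 0 = astar 0 := by rw [hb0, hastar00]
      have e1 := hdeg b hb
      have e2 := hdeg astar hastar
      rw [h00] at e1
      have h' : w1 * b 1 = w1 * astar 1 := by omega
      have h11 : b 1 = astar 1 := Nat.eq_of_mul_eq_mul_left h1 h'
      ext i
      fin_cases i
      · exact h00
      · exact h11
    have hevcalc : MvPolynomial.eval v (MvPolynomial.map (algebraMap F (AlgebraicClosure F)) f)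
        = algebraMap F (AlgebraicClosure F) (MvPolynomial.coeff astar f) * v 1 ^ astar 1 := by
      rw [MvPolynomial.eval_map, MvPolynomial.eval₂_eq']
      rw [Finset.sum_eq_single_of_mem astar hastar]
      · rw [Fin.prod_univ_two, h0v, hastar00, pow_zero, one_mul]
      · intro b hb hbne
        rw [Fin.prod_univ_two, h0v, zero_pow (huniq b hb hbne), zero_mul, mul_zero]
    rw [hevcalc] at hev
    rcases mul_eq_zero.mp hev with h' | h'
    · exact (MvPolynomial.mem_support_iff.mp hastar)
        ((algebraMap F (AlgebraicClosure F)).injective (by rw [map_zero]; exact h'))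
    · exact h1v (pow_eq_zero_iff'.mp h').1
  -- the target finite set
  set s0 : ℕ := if i₀ = 0 then 0 else 1 with hs0
  set s1 : ℕ := if ctop = 0 then 1 else 0 with hs1
  set W : Finset (Option (AlgebraicClosure F)) :=
    (gbar.roots.toFinset.image some ∪ (if i₀ = 0 then ∅ else {some 0})) ∪
      (if ctop = 0 then {none} else ∅) with hW
  have hWcard : W.card ≤ g.natDegree + s0 + s1 := by
    have c1 : (gbar.roots.toFinset.image some).card ≤ g.natDegree := by
      calc (gbar.roots.toFinset.image some).card ≤ gbar.roots.toFinset.card :=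
            Finset.card_image_le
        _ ≤ Multiset.card gbar.roots := Multiset.toFinset_card_le _
        _ ≤ gbar.natDegree := Polynomial.card_roots' gbar
        _ ≤ g.natDegree := Polynomial.natDegree_map_le
    have c2 : (if i₀ = 0 then (∅ : Finset (Option (AlgebraicClosure F))) else {some 0}).card
        = s0 := by
      rw [hs0]; split <;> simp
    have c3 : (if ctop = 0 then ({none} : Finset (Option (AlgebraicClosure F))) else ∅).card
        = s1 := by
      rw [hs1]; split <;> simp
    have u1 := Finset.card_union_le
      (gbar.roots.toFinset.image some ∪ (if i₀ = 0 then (∅ : Finset (Option (AlgebraicClosure F))) else {some 0}))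
      (if ctop = 0 then ({none} : Finset (Option (AlgebraicClosure F))) else ∅)
    have u2 := Finset.card_union_le (gbar.roots.toFinset.image some)
      (if i₀ = 0 then (∅ : Finset (Option (AlgebraicClosure F))) else {some 0})
    rw [hW]
    omega
  have hsub : phiBar F w0 w1 '' (vanishSet F ![w0, w1] f) ⊆ ↑W := by
    rintro o ⟨c, hc, rfl⟩
    obtain ⟨x, hx, -⟩ := hc.1
    have hevalx := hc.2
    rw [← hx, phiBar_mk]
    by_cases hx1 : x.1 1 = 0
    · rw [phiFun_of_eq F w0 w1 x hx1]
      have hx0 : x.1 0 ≠ 0 := ne_zero0 F x hx1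
      obtain ⟨z, hz⟩ := IsAlgClosed.exists_pow_nat_eq ((x.1 0)⁻¹) h0
      have hzne : z ≠ 0 := by
        intro hz0
        rw [hz0, zero_pow h0.ne'] at hz
        exact hx0 (inv_eq_zero.mp hz.symm)
      have hyne : (![1, 0] : Fin 2 → AlgebraicClosure F) ≠ 0 := by
        intro hcon
        have := congrFun hcon 0
        simp at this
      have hrel : wRel F ![w0, w1] x ⟨![1, 0], hyne⟩ := by
        refine ⟨Units.mk0 z hzne, Fin.forall_fin_two.mpr ⟨?_, ?_⟩⟩
        · show (![1, 0] : Fin 2 → AlgebraicClosure F) 0 = _ ^ (![w0, w1] 0) * x.1 0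
          simp only [Matrix.cons_val_zero, Units.val_mk0]
          rw [hz, inv_mul_cancel₀ hx0]
        · show (![1, 0] : Fin 2 → AlgebraicClosure F) 1 = _ ^ (![w0, w1] 1) * x.1 1
          simp [hx1]
      have hyc : PW.mk F ![w0, w1] ⟨![1, 0], hyne⟩ = c := by
        rw [← hx]
        exact (Quot.sound hrel).symm
      have hev := hevalx _ hyc
      have hct : ctop = 0 := hinfty ![1, 0] (by simp) (by simp) hev
      rw [hW]
      simp only [Finset.coe_union, Set.mem_union]
      right
      rw [if_pos hct]
      simp
    · rw [phiFun_of_ne F w0 w1 x hx1]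
      by_cases hx0 : x.1 0 = 0
      · have hzero : x.1 0 ^ w1 / x.1 1 ^ w0 = 0 := by
          rw [hx0, zero_pow h1.ne', zero_div]
        rw [hzero]
        obtain ⟨z, hz⟩ := IsAlgClosed.exists_pow_nat_eq ((x.1 1)⁻¹) h1
        have hzne : z ≠ 0 := by
          intro hz0
          rw [hz0, zero_pow h1.ne'] at hz
          exact hx1 (inv_eq_zero.mp hz.symm)
        have hyne : (![0, 1] : Fin 2 → AlgebraicClosure F) ≠ 0 := by
          intro hcon
          have := congrFun hcon 1
          simp at this
        have hrel : wRel F ![w0, w1] x ⟨![0, 1], hyne⟩ := by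
          refine ⟨Units.mk0 z hzne, Fin.forall_fin_two.mpr ⟨?_, ?_⟩⟩
          · show (![0, 1] : Fin 2 → AlgebraicClosure F) 0 = _ ^ (![w0, w1] 0) * x.1 0
            simp [hx0]
          · show (![0, 1] : Fin 2 → AlgebraicClosure F) 1 = _ ^ (![w0, w1] 1) * x.1 1
            simp only [Matrix.cons_val_one, Matrix.head_cons, Matrix.cons_val_zero, Units.val_mk0]
            rw [hz, inv_mul_cancel₀ hx1]
        have hyc : PW.mk F ![w0, w1] ⟨![0, 1], hyne⟩ = c := by
          rw [← hx]
          exact (Quot.sound hrel).symm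
        have hev := hevalx _ hyc
        have hi0ne : i₀ ≠ 0 := h0pt ![0, 1] (by simp) (by simp) hev
        rw [hW]
        simp only [Finset.coe_union, Set.mem_union]
        left; right
        rw [if_neg hi0ne]
        simp
      · have hev := hevalx x hx
        have hr := hroot x.1 hx0 hx1 hev
        rw [hW]
        simp only [Finset.coe_union, Set.mem_union]
        left; left
        simp only [Finset.coe_image, Set.mem_image, Finset.mem_coe]
        exact ⟨_, hr, rfl⟩
  have hcount : (vanishSet F ![w0, w1] f).ncard ≤ g.natDegree + s0 + s1 := by
    have h1' : (vanishSet F ![w0, w1] f).ncard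
        = (phiBar F w0 w1 '' (vanishSet F ![w0, w1] f)).ncard :=
      (Set.ncard_image_of_injective _ (phiBar_inj F w0 w1 h0 h1 hcop)).symm
    rw [h1']
    calc (phiBar F w0 w1 '' (vanishSet F ![w0, w1] f)).ncard
        ≤ (↑W : Set (Option (AlgebraicClosure F))).ncard :=
          Set.ncard_le_ncard hsub W.finite_toSet
      _ = W.card := Set.ncard_coe_finset W
      _ ≤ _ := hWcard
  refine ⟨?_, ?_, ?_⟩
  · rintro ⟨hw0d, hw1d⟩
    have hee2 : e2n = s0 := by
      rw [he2n, hs0]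
      by_cases hi : i₀ = 0
      · rw [if_neg (by simp [hi]), if_pos hi]
      · rw [if_pos ⟨hi, hw1d⟩, if_neg hi]
    have hee3 : e3n = s1 := by
      rw [he3n, hs1]
      by_cases hct : ctop = 0
      · rw [if_pos ⟨hw0d, hct⟩, if_pos hct]
      · rw [if_neg (by tauto), if_neg hct]
    omega
  · rintro (⟨hw0d, hw1d⟩ | ⟨hw0d, hw1d⟩)
    · have hee2 : e2n = 0 := by rw [he2n, if_neg (by tauto)]
      have hee3 : e3n = s1 := by
        rw [he3n, hs1]
        by_cases hct : ctop = 0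
        · rw [if_pos ⟨hw0d, hct⟩, if_pos hct]
        · rw [if_neg (by tauto), if_neg hct]
      have hs0le : s0 ≤ 1 := by rw [hs0]; split <;> omega
      omega
    · have hee2 : e2n = s0 := by
        rw [he2n, hs0]
        by_cases hi : i₀ = 0
        · rw [if_neg (by simp [hi]), if_pos hi]
        · rw [if_pos ⟨hi, hw1d⟩, if_neg hi]
      have hee3 : e3n = 0 := by rw [he3n, if_neg (by tauto)]
      have hs1le : s1 ≤ 1 := by rw [hs1]; split <;> omega
      omega
  · rintro ⟨hw0d, hw1d⟩
    have hee2 : e2n = 0 := by rw [he2n, if_neg (by tauto)]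
    have hee3 : e3n = 0 := by rw [he3n, if_neg (by tauto)]
    have hs0le : s0 ≤ 1 := by rw [hs0]; split <;> omega
    have hs1le : s1 ≤ 1 := by rw [hs1]; split <;> omega
    omega

end
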